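/- Let γ > 1 and let (y,v) range over the open set where 1+y > 0 and 1+y+v > 0. Define G(y,v) := 1 - (1+y)^{-2γ}(1+y+v)^{-γ}, G₂(y,v) := G(y,v) - 3γy - γv, H(y) := (1+y)² - (1+y)^{-2}, G_I(y,v) := (1+y)²(1 + γ^{-1} ∂_v G₂(y,v)) - 1, and G_{II1}(y,v) := γ^{-1}(1+y)² ∂_v G₂(y,v) · ((3γ-4)y + γv) + H(y) - 4y(1+y)² - (1+y)² G₂(y,v). Then for all such (y,v): ∂_v G_{II1}(y,v) = ∂_v G_I(y,v) · ((3γ-4)y + γv). -/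

import Mathlib

open Real Set

/-- `G(y,v)`, defined by `(1+y)^{-2γ}(1+y+v)^{-γ} = 1 - G(y,v)`. -/
noncomputable def Gfun (γ y v : ℝ) : ℝ := 1 - (1+y) ^ (-(2*γ)) * (1+y+v) ^ (-γ)

/-- `G₂(y,v) = G(y,v) - 3γy - γv`. -/
noncomputable def G2 (γ y v : ℝ) : ℝ := Gfun γ y v - 3*γ*y - γ*v

/-- `∂_v G₂(y,v)`. -/
noncomputable def dvG2 (γ y v : ℝ) : ℝ := deriv (fun v' => G2 γ y v') v

/-- `H(y) = (1+y)² - (1+y)^{-2}`. -/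
noncomputable def Hfun (y : ℝ) : ℝ := (1+y)^2 - ((1+y)^2)⁻¹

/-- `G_I(y,v) = (1+y)²(1 + γ^{-1}∂_v G₂(y,v)) - 1`. -/
noncomputable def GI (γ y v : ℝ) : ℝ := (1+y)^2 * (1 + γ⁻¹ * dvG2 γ y v) - 1

/-- `G_{II1}(y,v) = γ^{-1}(1+y)² ∂_vG₂ ((3γ-4)y + γv) + H(y) - 4y(1+y)² - (1+y)²G₂`. -/
noncomputable def GII1 (γ y v : ℝ) : ℝ :=
  γ⁻¹ * (1+y)^2 * dvG2 γ y v * ((3*γ-4)*y + γ*v)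
    + Hfun y - 4*y*(1+y)^2 - (1+y)^2 * G2 γ y v

open Filter Topology

lemma hasDerivAt_inner (y v' : ℝ) : HasDerivAt (fun t : ℝ => 1+y+t) 1 v' := by
  simpa using (hasDerivAt_id v').const_add (1+y)

lemma hasDerivAt_pow_inner (γ y v' p : ℝ) (h : 0 < 1+y+v') :
    HasDerivAt (fun t : ℝ => (1+y+t) ^ p) (p * (1+y+v') ^ (p-1)) v' := by
  have := (Real.hasDerivAt_rpow_const (x := 1+y+v') (p := p)
    (Or.inl h.ne')).comp v' (hasDerivAt_inner y v')
  exact this.congr_deriv (by ring)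

lemma hasDerivAt_G2 (γ y v' : ℝ) (h : 0 < 1+y+v') :
    HasDerivAt (fun t => G2 γ y t)
      (γ * (1+y)^(-(2*γ)) * (1+y+v')^(-γ-1) - γ) v' := by
  simp only [G2, Gfun]
  have h2 := hasDerivAt_pow_inner γ y v' (-γ) h
  have h4 := (((h2.const_mul ((1+y)^(-(2*γ)))).const_sub 1).sub_const
      (3*γ*y)).sub ((hasDerivAt_id v').const_mul γ)
  have : γ * (1+y)^(-(2*γ)) * (1+y+v')^(-γ-1) - γ
      = -((1+y)^(-(2*γ)) * (-γ * (1+y+v')^(-γ-1))) - γ * 1 := by ring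
  rw [this]
  exact h4.congr_of_eventuallyEq (Filter.Eventually.of_forall fun x => by simp only [Pi.sub_apply, id])

/-- The key cancellation `[U] = 0` in the proof of Proposition 5:
`∂_v G_{II1}(y,v) = ∂_v G_I(y,v) · ((3γ-4)y + γv)` wherever `1+y > 0` and
`1+y+v > 0`. -/
theorem bracket_vanishes (γ y v : ℝ) (hγ : 1 < γ)
    (hy : 0 < 1 + y) (hv : 0 < 1 + y + v) :
    deriv (fun v' => GII1 γ y v') v
      = deriv (fun v' => GI γ y v') v * ((3*γ-4)*y + γ*v) := by
  have hγ0 : γ ≠ 0 := by linarith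
  set c : ℝ := (1+y)^(-(2*γ)) with hc
  have hev : ∀ᶠ t in 𝓝 v, 0 < 1+y+t := by
    have hcont : Continuous fun t : ℝ => 1+y+t := by continuity
    exact (hcont.tendsto v).eventually (eventually_gt_nhds hv)
  have hdvG2 : ∀ t, 0 < 1+y+t → dvG2 γ y t = γ * c * (1+y+t)^(-γ-1) - γ :=
    fun t ht => (hasDerivAt_G2 γ y t ht).deriv
  -- explicit forms
  have hI : (fun t => GI γ y t)
      =ᶠ[𝓝 v] (fun t => (1+y)^2 * c * (1+y+t)^(-γ-1) - 1) := by
    filter_upwards [hev] with t ht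
    rw [GI, hdvG2 t ht]
    field_simp
    ring
  have hII : (fun t => GII1 γ y t)
      =ᶠ[𝓝 v] (fun t =>
        γ⁻¹ * (1+y)^2 * (γ * c * (1+y+t)^(-γ-1) - γ) * ((3*γ-4)*y + γ*t)
          + (Hfun y) - 4*y*(1+y)^2
          - (1+y)^2 * (1 - c * (1+y+t)^(-γ) - 3*γ*y - γ*t)) := by
    filter_upwards [hev] with t ht
    rw [GII1, hdvG2 t ht]
    simp only [G2, Gfun]
    rw [hc]
  rw [hI.deriv_eq, hII.deriv_eq]
  -- derivatives of explicit forms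
  have hT1 : HasDerivAt (fun t : ℝ => (1+y+t)^(-γ-1))
      ((-γ-1) * (1+y+v)^(-γ-2)) v := by
    have := hasDerivAt_pow_inner γ y v (-γ-1) hv
    rwa [show -γ-1-1 = -γ-2 by ring] at this
  have hgI : HasDerivAt (fun t => (1+y)^2 * c * (1+y+t)^(-γ-1) - 1)
      ((1+y)^2 * c * ((-γ-1) * (1+y+v)^(-γ-2))) v :=
    (hT1.const_mul ((1+y)^2 * c)).sub_const 1
  have hf1 : HasDerivAt (fun t => γ⁻¹ * (1+y)^2 * (γ * c * (1+y+t)^(-γ-1) - γ))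
      (γ⁻¹ * (1+y)^2 * (γ * c * ((-γ-1) * (1+y+v)^(-γ-2)))) v := by
    have := ((hT1.const_mul (γ*c)).sub_const γ).const_mul (γ⁻¹ * (1+y)^2)
    convert this using 1
    all_goals ring
  have hf2 : HasDerivAt (fun t : ℝ => (3*γ-4)*y + γ*t) γ v := by
    simpa using ((hasDerivAt_id v).const_mul γ).const_add ((3*γ-4)*y)
  have hg3 : HasDerivAt (fun t : ℝ => 1 - c * (1+y+t)^(-γ) - 3*γ*y - γ*t)
      (-(c * (-γ * (1+y+v)^(-γ-1))) - γ) v := by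
    have := ((((hasDerivAt_pow_inner γ y v (-γ) hv).const_mul c).const_sub 1).sub_const
        (3*γ*y)).sub ((hasDerivAt_id v).const_mul γ)
    exact (this.congr_of_eventuallyEq (Filter.Eventually.of_forall fun x => by
      simp only [Pi.sub_apply, id])).congr_deriv (by ring)
  have htotal := (((hf1.mul hf2).add_const (Hfun y)).sub_const
      (4*y*(1+y)^2)).sub (hg3.const_mul ((1+y)^2))
  have hd : deriv (fun t =>
        γ⁻¹ * (1+y)^2 * (γ * c * (1+y+t)^(-γ-1) - γ) * ((3*γ-4)*y + γ*t)
          + (Hfun y) - 4*y*(1+y)^2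
          - (1+y)^2 * (1 - c * (1+y+t)^(-γ) - 3*γ*y - γ*t)) v = _ := htotal.deriv
  rw [hd, hgI.deriv]
  field_simp
  ring
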